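/- Let E be a finite-dimensional real inner product space and let A : E → E be a symmetric positive-definite continuous linear map. Let D be a finite index set of size n and, for each z ∈ D, let L_z(φ) = ½⟨φ, Aφ⟩ − ⟨b_z, φ⟩ be a quadratic per-sample loss with common Hessian A. Let θ₀ be the (unique) minimizer of the empirical risk R = (1/n) Σ_{z ∈ D} L_z, let U ⊆ D with u := |U| satisfying 0 < u < n, and let θ̂ be the unique minimizer of the remaining-data risk (1/(n−u)) Σ_{z ∈ D∖U} L_z. Define the FUDLR update Δθ := (1/n) A⁻¹ Σ_{z ∈ U} ∇L_z(θ₀). Then θ̂ − (θ₀ + Δθ) = (u/(n−u)) Δθ; in particular ‖θ̂ − (θ₀ + Δθ)‖ = (u/(n−u)) ‖Δθ‖, which is small relative to ‖Δθ‖ whenever u ≪ n. -/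

import Mathlib

open scoped RealInnerProductSpace

lemma quad_min {E : Type*} [NormedAddCommGroup E] [InnerProductSpace ℝ E]
    (A : E →L[ℝ] E) (hAsym : ∀ x y, ⟪A x, y⟫ = ⟪x, A y⟫) (s θ : E)
    (h : ∀ φ, (1/2) * ⟪θ, A θ⟫ - ⟪s, θ⟫ ≤ (1/2) * ⟪φ, A φ⟫ - ⟪s, φ⟫) :
    A θ = s := by
  have key : ∀ v : E, ⟪v, A θ - s⟫ = 0 := by
    intro v
    have hq : ∀ t : ℝ, 0 ≤ t * ⟪v, A θ - s⟫ + t^2/2 * ⟪v, A v⟫ := by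
      intro t
      have h2 := h (θ + t • v)
      have h1 : ⟪θ, A v⟫ = ⟪v, A θ⟫ := by rw [← hAsym, real_inner_comm]
      have expand : ⟪θ + t • v, A (θ + t • v)⟫
          = ⟪θ, A θ⟫ + 2 * t * ⟪v, A θ⟫ + t^2 * ⟪v, A v⟫ := by
        simp only [map_add, map_smul, inner_add_left, inner_add_right,
          real_inner_smul_left, real_inner_smul_right, h1]
        ring
      have hs : ⟪s, θ + t • v⟫ = ⟪s, θ⟫ + t * ⟪s, v⟫ := by
        rw [inner_add_right, real_inner_smul_right]
      rw [expand, hs] at h2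
      have hsv : ⟪s, v⟫ = ⟪v, s⟫ := real_inner_comm _ _
      rw [hsv] at h2
      rw [inner_sub_right]
      nlinarith [h2]
    by_contra hne
    set a := ⟪v, A θ - s⟫ with ha
    set c := ⟪v, A v⟫ with hc
    have hδpos : (0:ℝ) < 1/(|c|+1) := by positivity
    set δ : ℝ := 1/(|c|+1) with hδdef
    have hδ : δ * (|c|+1) = 1 := by rw [hδdef]; exact one_div_mul_cancel (by positivity)
    have habs : c ≤ |c| := le_abs_self c
    have ha2 : 0 < a^2 := by
      rcases lt_or_eq_of_le (sq_nonneg a) with h' | h'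
      · exact h'
      · exact absurd (pow_eq_zero_iff (n := 2) (by norm_num) |>.mp h'.symm) hne
    have ht := hq (-(a * δ))
    nlinarith [ht, mul_pos ha2 hδpos, mul_le_mul_of_nonneg_left habs
      (by positivity : (0:ℝ) ≤ a^2*δ^2/2), hδ]
  have h0 : A θ - s = 0 := inner_self_eq_zero.mp (key (A θ - s))
  exact sub_eq_zero.mp h0

lemma quad_gradient {E : Type*} [NormedAddCommGroup E] [InnerProductSpace ℝ E]
    [CompleteSpace E] (A : E →L[ℝ] E) (hAsym : ∀ x y, ⟪A x, y⟫ = ⟪x, A y⟫) (c θ : E) :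
    HasGradientAt (fun φ => (1/2) * ⟪φ, A φ⟫ - ⟪c, φ⟫) (A θ - c) θ := by
  rw [hasGradientAt_iff_hasFDerivAt]
  have h1 : HasFDerivAt (fun φ : E => ⟪φ, A φ⟫)
      ((fderivInnerCLM ℝ (θ, A θ)).comp ((ContinuousLinearMap.id ℝ E).prod A)) θ :=
    (hasFDerivAt_id θ).inner ℝ (A.hasFDerivAt)
  have h2 : HasFDerivAt (fun φ : E => ⟪c, φ⟫)
      ((fderivInnerCLM ℝ (c, θ)).comp ((0 : E →L[ℝ] E).prod (ContinuousLinearMap.id ℝ E))) θ :=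
    (hasFDerivAt_const c θ).inner ℝ (hasFDerivAt_id θ)
  have h3 := (h1.const_mul (1/2 : ℝ)).sub h2
  refine h3.congr_fderiv ?_
  ext v
  have hv : ⟪θ, A v⟫ = ⟪v, A θ⟫ := by rw [← hAsym, real_inner_comm]
  simp only [ContinuousLinearMap.coe_comp', Function.comp_apply,
    ContinuousLinearMap.prod_apply, ContinuousLinearMap.coe_id', id,
    fderivInnerCLM_apply, ContinuousLinearMap.sub_apply,
    ContinuousLinearMap.coe_smul', Pi.smul_apply, smul_eq_mul,
    InnerProductSpace.toDual_apply_apply, ContinuousLinearMap.zero_apply, inner_zero_left,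
    inner_sub_left, hv]
  rw [real_inner_comm v (A θ)]
  ring

/-- Gap between the FUDLR one-step estimate and true retraining in the quadratic
common-Hessian model: `θ̂ - (θ₀ + Δθ) = (u/(n-u)) • Δθ`, hence the gap is small
relative to `‖Δθ‖` when `u ≪ n`. -/
theorem fudlr_retraining_gap
    {E : Type*} [NormedAddCommGroup E] [InnerProductSpace ℝ E] [FiniteDimensional ℝ E]
    {ι : Type*} [DecidableEq ι] (D U : Finset ι) (hUD : U ⊆ D)
    (n u : ℕ) (hn : n = D.card) (hu : u = U.card) (hu0 : 0 < u) (hun : u < n)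
    (A : E ≃L[ℝ] E)
    (hAsym : ∀ x y, ⟪(A : E →L[ℝ] E) x, y⟫ = ⟪x, (A : E →L[ℝ] E) y⟫)
    (hApos : ∀ x, x ≠ 0 → 0 < ⟪x, (A : E →L[ℝ] E) x⟫)
    (b : ι → E) (L : ι → E → ℝ)
    (hL : ∀ z φ, L z φ = (1 / 2) * ⟪φ, (A : E →L[ℝ] E) φ⟫ - ⟪b z, φ⟫)
    (R : E → ℝ) (hR : ∀ φ, R φ = (1 / (n : ℝ)) * ∑ z ∈ D, L z φ)
    (θ₀ : E) (hθ₀min : ∀ φ, R θ₀ ≤ R φ)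
    (Rrem : E → ℝ)
    (hRrem : ∀ φ, Rrem φ = (1 / ((n : ℝ) - u)) * ∑ z ∈ D \ U, L z φ)
    (θhat : E) (hθhatmin : ∀ φ, Rrem θhat ≤ Rrem φ)
    (Δθ : E) (hΔθ : Δθ = (1 / (n : ℝ)) • A.symm (∑ z ∈ U, gradient (L z) θ₀)) :
    θhat - (θ₀ + Δθ) = ((u : ℝ) / ((n : ℝ) - u)) • Δθ ∧
    ‖θhat - (θ₀ + Δθ)‖ = ((u : ℝ) / ((n : ℝ) - u)) * ‖Δθ‖ := by
  have : CompleteSpace E := FiniteDimensional.complete ℝ E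
  set Acl : E →L[ℝ] E := (A : E →L[ℝ] E) with hAcl
  have hnpos : 0 < n := lt_trans hu0 hun
  have hn0 : (0:ℝ) < (n:ℝ) := by exact_mod_cast hnpos
  have hunR : (u:ℝ) < (n:ℝ) := by exact_mod_cast hun
  have hnu : (0:ℝ) < (n:ℝ) - u := by linarith
  set SD := ∑ z ∈ D, b z with hSD
  set SU := ∑ z ∈ U, b z with hSU
  have hsum : ∀ (F : Finset ι) (φ : E), ∑ z ∈ F, L z φ
      = (F.card : ℝ) * ((1/2) * ⟪φ, Acl φ⟫) - ⟪∑ z ∈ F, b z, φ⟫ := by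
    intro F φ
    rw [Finset.sum_congr rfl (fun z _ => hL z φ), Finset.sum_sub_distrib,
      Finset.sum_const, ← sum_inner]
    simp [nsmul_eq_mul]
  have hRq : ∀ φ, R φ = (1/2) * ⟪φ, Acl φ⟫ - ⟪(1/(n:ℝ)) • SD, φ⟫ := by
    intro φ
    rw [hR, hsum, ← hn, real_inner_smul_left]
    field_simp
    ring
  have hθ0 : Acl θ₀ = (1/(n:ℝ)) • SD := by
    refine quad_min Acl hAsym _ θ₀ (fun φ => ?_)
    have := hθ₀min φ
    rwa [hRq, hRq] at this
  have hcard : ((D \ U).card : ℝ) = (n:ℝ) - u := by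
    rw [Finset.card_sdiff_of_subset hUD, Nat.cast_sub (Finset.card_le_card hUD), ← hn, ← hu]
  have hRremq : ∀ φ, Rrem φ = (1/2) * ⟪φ, Acl φ⟫ - ⟪(1/((n:ℝ)-u)) • (SD - SU), φ⟫ := by
    intro φ
    rw [hRrem, hsum, hcard, Finset.sum_sdiff_eq_sub hUD, real_inner_smul_left]
    field_simp
    ring
  have hθh : Acl θhat = (1/((n:ℝ)-u)) • (SD - SU) := by
    refine quad_min Acl hAsym _ θhat (fun φ => ?_)
    have := hθhatmin φ
    rwa [hRremq, hRremq] at this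
  have hgrad : ∀ z, gradient (L z) θ₀ = Acl θ₀ - b z := by
    intro z
    have hLz : L z = fun φ => (1/2) * ⟪φ, Acl φ⟫ - ⟪b z, φ⟫ := funext (hL z)
    rw [hLz]
    exact (quad_gradient Acl hAsym (b z) θ₀).gradient
  set p : E := A.symm SD with hp
  set q : E := A.symm SU with hq
  have hθ0' : θ₀ = (1/(n:ℝ)) • p := by
    have h := congrArg A.symm hθ0
    simp only [hAcl, ContinuousLinearEquiv.coe_coe,
      ContinuousLinearEquiv.symm_apply_apply, map_smul] at h
    rw [hp]; exact h
  have hθh' : θhat = (1/((n:ℝ)-u)) • (p - q) := by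
    have h := congrArg A.symm hθh
    simp only [hAcl, ContinuousLinearEquiv.coe_coe,
      ContinuousLinearEquiv.symm_apply_apply, map_smul, map_sub] at h
    rw [hp, hq]; exact h
  have hΔ' : Δθ = (1/(n:ℝ)) • ((u:ℝ) • θ₀ - q) := by
    rw [hΔθ]
    congr 1
    have hsumg : ∑ z ∈ U, gradient (L z) θ₀ = U.card • Acl θ₀ - SU := by
      rw [Finset.sum_congr rfl (fun z _ => hgrad z), Finset.sum_sub_distrib,
        Finset.sum_const]
    rw [hsumg, map_sub, map_nsmul]
    simp only [hAcl, ContinuousLinearEquiv.coe_coe,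
      ContinuousLinearEquiv.symm_apply_apply]
    rw [← hu, ← hq, ← Nat.cast_smul_eq_nsmul ℝ]
  have key : θhat - (θ₀ + Δθ) = ((u:ℝ)/((n:ℝ)-u)) • Δθ := by
    rw [hΔ', hθh', hθ0']
    match_scalars
    · field_simp
      ring
    · field_simp
      ring
  refine ⟨key, ?_⟩
  rw [key, norm_smul, Real.norm_eq_abs,
    abs_of_nonneg (div_nonneg (Nat.cast_nonneg u) hnu.le)]
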